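/- Let k ≥ 1 and let b : V(W_{2k+1}) → ℤ₃ satisfy ∑_{v} b(v) ≡ 0 (mod 3). If b(v) ≠ 0 for some vertex v of the odd wheel W_{2k+1}, then there is an orientation D of W_{2k+1} such that d⁺_D(x) − d⁻_D(x) ≡ b(x) (mod 3) for every vertex x. -/

import Mathlib

/-- A finite loopless multigraph: each edge has an ordered pair of distinct endpoints
(the ordering is immaterial; it is only used to describe orientations). -/
structure Multigraph : Type 1 where
  V : Type
  fintypeV : Fintype V
  decEqV : DecidableEq V
  E : Type
  fintypeE : Fintype E
  decEqE : DecidableEq E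
  ends : E → V × V
  loopless : ∀ e, (ends e).1 ≠ (ends e).2

attribute [instance] Multigraph.fintypeV Multigraph.decEqV Multigraph.fintypeE Multigraph.decEqE

namespace Multigraph

variable (G : Multigraph)

/-- Tail of an edge under an orientation `D` (`true` = directed from first to second end). -/
def tail (D : G.E → Bool) (e : G.E) : G.V := if D e then (G.ends e).1 else (G.ends e).2

/-- Head of an edge under an orientation `D`. -/
def head (D : G.E → Bool) (e : G.E) : G.V := if D e then (G.ends e).2 else (G.ends e).1

/-- Out-degree of `v` under orientation `D`. -/
def outDeg (D : G.E → Bool) (v : G.V) : ℕ := (Finset.univ.filter fun e => G.tail D e = v).card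

/-- In-degree of `v` under orientation `D`. -/
def inDeg (D : G.E → Bool) (v : G.V) : ℕ := (Finset.univ.filter fun e => G.head D e = v).card

/-- A modulo 3-orientation. -/
def HasMod3Orientation : Prop :=
  ∃ D : G.E → Bool, ∀ v : G.V, ((G.outDeg D v : ZMod 3) = (G.inDeg D v : ZMod 3))

/-- A nowhere-zero 3-flow. -/
def HasNowhereZero3Flow : Prop :=
  ∃ (D : G.E → Bool) (f : G.E → ℤ),
    (∀ e, 1 ≤ |f e| ∧ |f e| ≤ 2) ∧
    (∀ v : G.V,
      (∑ e : G.E, if G.tail D e = v then f e else 0) =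
      (∑ e : G.E, if G.head D e = v then f e else 0))

/-- `ℤ₃`-connectivity. -/
def Z3Connected : Prop :=
  ∀ b : G.V → ZMod 3, (∑ v : G.V, b v) = 0 →
    ∃ D : G.E → Bool, ∀ v : G.V, (G.outDeg D v : ZMod 3) - (G.inDeg D v : ZMod 3) = b v

/-- Degree of a vertex. -/
def degree (v : G.V) : ℕ :=
  (Finset.univ.filter fun e => (G.ends e).1 = v ∨ (G.ends e).2 = v).card

/-- Minimum degree `δ(G)`. -/
noncomputable def minDegree : ℕ := sInf (Set.range G.degree)

/-- The edge cut `∂_G(S)`. -/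
def cut (S : Finset G.V) : Finset G.E :=
  Finset.univ.filter fun e =>
    ((G.ends e).1 ∈ S ∧ (G.ends e).2 ∉ S) ∨ ((G.ends e).2 ∈ S ∧ (G.ends e).1 ∉ S)

def Adjacent (u v : G.V) : Prop :=
  ∃ e : G.E, G.ends e = (u, v) ∨ G.ends e = (v, u)

def IsIndepSet (S : Finset G.V) : Prop :=
  ∀ u ∈ S, ∀ v ∈ S, u ≠ v → ¬ G.Adjacent u v

/-- The independence number `α(G)`. -/
noncomputable def indepNum : ℕ := sSup {n : ℕ | ∃ S : Finset G.V, G.IsIndepSet S ∧ S.card = n}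

def FiveEdgeConnected : Prop :=
  ∀ S : Finset G.V, S.Nonempty → S ≠ Finset.univ → 5 ≤ (G.cut S).card

/-- Every odd edge cut has at least 5 edges. -/
def Odd5EdgeConnected : Prop :=
  ∀ S : Finset G.V, Odd (G.cut S).card → 5 ≤ (G.cut S).card

/-- `G` contains `K₄` as a subgraph. -/
def ContainsK4 : Prop :=
  ∃ a b c d : G.V, a ≠ b ∧ a ≠ c ∧ a ≠ d ∧ b ≠ c ∧ b ≠ d ∧ c ≠ d ∧
    G.Adjacent a b ∧ G.Adjacent a c ∧ G.Adjacent a d ∧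
    G.Adjacent b c ∧ G.Adjacent b d ∧ G.Adjacent c d

/-- The neighbourhood `N(X)`: vertices outside `X` with a neighbour in `X`. -/
noncomputable def neighborFinset (X : Finset G.V) : Finset G.V := by
  classical
  exact Finset.univ.filter fun y => y ∉ X ∧ ∃ x ∈ X, G.Adjacent x y

/-- Induced subgraph on a vertex set `S`. -/
def induce (S : Finset G.V) : Multigraph where
  V := {v // v ∈ S}
  fintypeV := inferInstance
  decEqV := inferInstance
  E := {e : G.E // (G.ends e).1 ∈ S ∧ (G.ends e).2 ∈ S}
  fintypeE := inferInstance
  decEqE := inferInstance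
  ends := fun e => (⟨(G.ends e.1).1, e.2.1⟩, ⟨(G.ends e.1).2, e.2.2⟩)
  loopless := fun e h => G.loopless e.1 (congrArg Subtype.val h)

/-- The relation identifying the two ends of each edge in `F`. -/
def contractRel (F : Set G.E) (x y : G.V) : Prop :=
  ∃ e ∈ F, G.ends e = (x, y) ∨ G.ends e = (y, x)

/-- Contraction of a set `F` of edges: identify endpoints of edges of `F`
(via the equivalence closure), delete the edges of `F` and all resulting loops. -/
noncomputable def contractEdges (F : Set G.E) : Multigraph := by
  classical
  exact
    { V := Quot (G.contractRel F)
      fintypeV := Fintype.ofSurjective (Quot.mk _) (fun q => Quot.inductionOn q fun a => ⟨a, rfl⟩)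
      decEqV := Classical.decEq _
      E := {e : G.E // e ∉ F ∧
            Quot.mk (G.contractRel F) (G.ends e).1 ≠ Quot.mk (G.contractRel F) (G.ends e).2}
      fintypeE := Subtype.fintype _
      decEqE := Classical.decEq _
      ends := fun e => (Quot.mk _ (G.ends e.1).1, Quot.mk _ (G.ends e.1).2)
      loopless := fun e => e.2.2 }

end Multigraph

/-- A subgraph of a multigraph. -/
structure Multigraph.Subgraph (G : Multigraph) where
  verts : Finset G.V
  edges : Finset G.E
  ends_mem : ∀ e ∈ edges, (G.ends e).1 ∈ verts ∧ (G.ends e).2 ∈ verts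

namespace Multigraph

/-- A subgraph as a multigraph in its own right. -/
def Subgraph.toMultigraph {G : Multigraph} (H : G.Subgraph) : Multigraph where
  V := {v // v ∈ H.verts}
  fintypeV := inferInstance
  decEqV := inferInstance
  E := {e // e ∈ H.edges}
  fintypeE := inferInstance
  decEqE := inferInstance
  ends := fun e => (⟨(G.ends e.1).1, (H.ends_mem e.1 e.2).1⟩, ⟨(G.ends e.1).2, (H.ends_mem e.1 e.2).2⟩)
  loopless := fun e h => G.loopless e.1 (congrArg Subtype.val h)

/-- `G` is `⟨ℤ₃⟩`-reduced: it has no `ℤ₃`-connected subgraph with at least two vertices. -/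
def Z3Reduced (G : Multigraph) : Prop :=
  ∀ H : G.Subgraph, H.toMultigraph.Z3Connected → H.verts.card ≤ 1

/-- The contraction `G/H` of a subgraph. -/
noncomputable def contractSubgraph (G : Multigraph) (H : G.Subgraph) : Multigraph :=
  G.contractEdges {e | e ∈ H.edges}

/-- The `⟨ℤ₃⟩`-reduction of `G`: contract (the edges of) all maximal `ℤ₃`-connected
subgraphs of `G`. -/
noncomputable def reduction (G : Multigraph) : Multigraph :=
  G.contractEdges {e | ∃ H : G.Subgraph, H.toMultigraph.Z3Connected ∧ e ∈ H.edges}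

end Multigraph

/-- `r(n)`: the maximum number of edges of a `⟨ℤ₃⟩`-reduced graph on `n` vertices. -/
noncomputable def edgeMaxReduced (n : ℕ) : ℕ :=
  sSup {m : ℕ | ∃ G : Multigraph, G.Z3Reduced ∧ Fintype.card G.V = n ∧ Fintype.card G.E = m}

/-- The complete graph `K_n`. -/
def completeK (n : ℕ) : Multigraph where
  V := Fin n
  fintypeV := inferInstance
  decEqV := inferInstance
  E := {p : Fin n × Fin n // p.1 < p.2}
  fintypeE := inferInstance
  decEqE := inferInstance
  ends := fun p => p.1
  loopless := fun p => Fin.ne_of_lt p.2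

private theorem fin_succ_ne {n : ℕ} (hn : 2 ≤ n) (i : Fin n)
    (hv : (i : ℕ) = ((i : ℕ) + 1) % n) : False := by
  have hi := i.isLt
  by_cases hlt : (i : ℕ) + 1 < n
  · rw [Nat.mod_eq_of_lt hlt] at hv; omega
  · have he : (i : ℕ) + 1 = n := by omega
    rw [he, Nat.mod_self] at hv; omega

/-- The cycle `C_n` (for `n ≥ 2`); `C_2` is a digon. -/
def cycleGraph (n : ℕ) (hn : 2 ≤ n) : Multigraph where
  V := Fin n
  fintypeV := inferInstance
  decEqV := inferInstance
  E := Fin n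
  fintypeE := inferInstance
  decEqE := inferInstance
  ends := fun i => (i, ⟨((i : ℕ) + 1) % n, Nat.mod_lt _ (by omega)⟩)
  loopless := fun i h => fin_succ_ne hn i (congrArg Fin.val h)

/-- The wheel `W_n` (for `n ≥ 2`): an `n`-cycle on `some 0, …, some (n-1)` together
with a center `none` joined to every vertex of the cycle. -/
def wheelGraph (n : ℕ) (hn : 2 ≤ n) : Multigraph where
  V := Option (Fin n)
  fintypeV := inferInstance
  decEqV := inferInstance
  E := Fin n ⊕ Fin n
  fintypeE := inferInstance
  decEqE := inferInstance
  ends := fun e => match e with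
    | .inl i => (some i, some ⟨((i : ℕ) + 1) % n, Nat.mod_lt _ (by omega)⟩)
    | .inr i => (none, some i)
  loopless := by
    rintro (i | i) h
    · exact fin_succ_ne hn i (congrArg Fin.val (Option.some_injective _ h))
    · exact nomatch (show (none : Option (Fin n)) = some i from h)

private lemma fin_sub_one_val (n : ℕ) [NeZero n] (hn : 2 ≤ n) (a : Fin n) (h : a ≠ 0) :
    (a - 1).val = a.val - 1 := by
  have h1 : (1 : Fin n).val = 1 := by simp [Fin.val_one', Nat.mod_eq_of_lt hn]
  have hv : a.val ≠ 0 := fun hh => h (Fin.ext hh)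
  have hlt := a.isLt
  rw [Fin.sub_def]
  simp only [h1]
  have : n - 1 + a.val = n + (a.val - 1) := by omega
  rw [this, Nat.add_mod_left, Nat.mod_eq_of_lt (by omega)]

private lemma diff_eq_sum (G : Multigraph) (D : G.E → Bool) (v : G.V) :
    (G.outDeg D v : ZMod 3) - (G.inDeg D v : ZMod 3) =
    ∑ e, ((if (G.ends e).1 = v then (if D e then (1 : ZMod 3) else -1) else 0)
        - (if (G.ends e).2 = v then (if D e then (1 : ZMod 3) else -1) else 0)) := by
  rw [Multigraph.outDeg, Multigraph.inDeg, Finset.card_filter, Finset.card_filter]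
  push_cast
  rw [← Finset.sum_sub_distrib]
  refine Finset.sum_congr rfl fun e _ => ?_
  have hl := G.loopless e
  unfold Multigraph.tail Multigraph.head
  cases hD : D e <;> split_ifs <;> simp_all

open Fin.NatCast in
private lemma wheel_main (n : ℕ) (hn : 2 ≤ n)
    (b : (wheelGraph n hn).V → ZMod 3)
    (hsum : (∑ v, b v) = 0) (hne : ∃ v, b v ≠ 0) :
    ∃ D : (wheelGraph n hn).E → Bool,
      ∀ x, ((wheelGraph n hn).outDeg D x : ZMod 3) -
        ((wheelGraph n hn).inDeg D x : ZMod 3) = b x := by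
  classical
  haveI : NeZero n := ⟨by omega⟩
  have hends1 : ∀ i : Fin n, (wheelGraph n hn).ends (Sum.inl i) = (some i, some (i + 1)) := by
    intro i
    show (some i, some (⟨(i.val + 1) % n, _⟩ : Fin n)) = _
    have : (⟨(i.val + 1) % n, Nat.mod_lt _ (by omega)⟩ : Fin n) = i + 1 := by
      apply Fin.ext
      rw [Fin.add_def]
      simp [Fin.val_one', Nat.add_mod, Nat.mod_mod_of_dvd]
    rw [this]
  have hends2 : ∀ i : Fin n, (wheelGraph n hn).ends (Sum.inr i) = (none, some i) := fun i => rfl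
  -- sum over option
  have hsum' : b none + ∑ i : Fin n, b (some i) = 0 := by
    rw [← hsum]; exact (Fintype.sum_option b).symm
  obtain ⟨j, hj⟩ : ∃ j : Fin n, b (some j) ≠ 0 := by
    by_contra h
    push_neg at h
    obtain ⟨v, hv⟩ := hne
    rcases v with _ | i
    · apply hv
      have hz : ∑ i : Fin n, b (some i) = 0 := Finset.sum_eq_zero fun i _ => h i
      rw [hz, add_zero] at hsum'
      exact hsum'
    · exact hv (h i)
  -- the recursive assignment of rim values
  set X : ℕ → ZMod 3 := fun t =>
    Nat.rec (b (some j))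
      (fun t ih => if b (some (j + ((t + 1 : ℕ) : Fin n))) = 0 then -ih else ih) t with hX
  have hX0 : X 0 = b (some j) := rfl
  have hXs : ∀ t, X (t + 1) =
      if b (some (j + ((t + 1 : ℕ) : Fin n))) = 0 then -(X t) else X t := fun t => rfl
  have hXne : ∀ t, X t ≠ 0 := by
    intro t
    induction t with
    | zero => exact hj
    | succ t ih => rw [hXs]; split_ifs; exacts [neg_ne_zero.mpr ih, ih]
  set x : Fin n → ZMod 3 := fun i => X (i - j).val with hxdef
  set y : Fin n → ZMod 3 := fun i => x i - x (i - 1) - b (some i) with hydef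
  have hxne : ∀ i, x i ≠ 0 := fun i => hXne _
  have hxj : x j = b (some j) := by
    show X ((j - j).val) = _
    rw [sub_self]
    exact hX0
  have hyne : ∀ i, y i ≠ 0 := by
    intro i
    by_cases hij : i = j
    · rw [hij]
      have : y j = -(X ((j - 1 - j).val)) := by
        show x j - x (j - 1) - b (some j) = _
        rw [hxj]
        show _ - X ((j - 1 - j).val) - _ = _
        ring
      rw [this]
      exact neg_ne_zero.mpr (hXne _)
    · have hsub : i - j ≠ 0 := sub_ne_zero.mpr hij
      have hval1 : 1 ≤ (i - j).val := by
        rcases Nat.eq_zero_or_pos (i - j).val with h0 | h0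
        · exact absurd (Fin.ext h0) hsub
        · exact h0
      obtain ⟨t, ht⟩ : ∃ t, (i - j).val = t + 1 := ⟨(i - j).val - 1, by omega⟩
      have hxi : x i = X (t + 1) := by show X ((i - j).val) = _; rw [ht]
      have hxi1 : x (i - 1) = X t := by
        show X ((i - 1 - j).val) = _
        rw [sub_right_comm, fin_sub_one_val n (by omega) _ hsub, ht, Nat.add_sub_cancel]
      have hidx : j + ((t + 1 : ℕ) : Fin n) = i := by
        have : ((t + 1 : ℕ) : Fin n) = i - j := by
          rw [← ht, Fin.cast_val_eq_self]
        rw [this]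
        abel
      have hXi : X (t + 1) = if b (some i) = 0 then -(X t) else X t := by
        rw [hXs, hidx]
      by_cases hb : b (some i) = 0
      · have : y i = -(X t) - X t - 0 := by
          show x i - x (i - 1) - b (some i) = _
          rw [hxi, hxi1, hXi, if_pos hb, hb]
        rw [this]
        have h2 : ∀ a : ZMod 3, a ≠ 0 → -a - a - 0 ≠ 0 := by decide
        exact h2 _ (hXne t)
      · have : y i = -(b (some i)) := by
          show x i - x (i - 1) - b (some i) = _
          rw [hxi, hxi1, hXi, if_neg hb]
          ring
        rw [this]
        exact neg_ne_zero.mpr hb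
  have hysum : ∑ i, y i = b none := by
    have h1 : ∑ i : Fin n, x (i - 1) = ∑ i : Fin n, x i :=
      Fintype.sum_equiv (Equiv.subRight (1 : Fin n)) _ _ (fun i => rfl)
    have h2 : ∑ i, y i = -∑ i : Fin n, b (some i) := by
      simp only [hydef, Finset.sum_sub_distrib, h1]
      ring
    rw [h2]
    linear_combination -hsum'
  -- the orientation
  set Dx : Fin n → Bool := fun i => decide (x i = 1) with hDx
  set Dy : Fin n → Bool := fun i => decide (y i = 1) with hDy
  have hval : ∀ a : ZMod 3, a ≠ 0 → (if a = 1 then (1 : ZMod 3) else -1) = a := by decide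
  refine ⟨Sum.elim Dx Dy, fun v => ?_⟩
  have hvx : ∀ l : Fin n, (if Sum.elim Dx Dy (Sum.inl l) then (1 : ZMod 3) else -1) = x l := by
    intro l
    show (if decide (x l = 1) = true then (1 : ZMod 3) else -1) = x l
    simp only [decide_eq_true_eq]
    exact hval _ (hxne l)
  have hvy : ∀ l : Fin n, (if Sum.elim Dx Dy (Sum.inr l) then (1 : ZMod 3) else -1) = y l := by
    intro l
    show (if decide (y l = 1) = true then (1 : ZMod 3) else -1) = y l
    simp only [decide_eq_true_eq]
    exact hval _ (hyne l)
  refine (diff_eq_sum (wheelGraph n hn) (Sum.elim Dx Dy) v).trans ?_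
  have hsplit : ∀ F : Fin n ⊕ Fin n → ZMod 3,
      (∑ e : (wheelGraph n hn).E, F e) = (∑ l : Fin n, F (.inl l)) + ∑ l : Fin n, F (.inr l) :=
    fun F => Fintype.sum_sum_type F
  refine Eq.trans (hsplit _) ?_
  simp only [hends1, hends2, hvx, hvy]
  rcases v with _ | i
  · -- center
    simp only [reduceCtorEq, if_false, if_true, sub_zero, zero_sub]
    rw [Finset.sum_const, smul_zero, zero_add]
    exact (Finset.sum_congr rfl fun _ _ => if_pos rfl).trans hysum
  · -- rim vertex i
    have hinj : ∀ a c : Fin n, ((some a : (wheelGraph n hn).V) = some c) = (a = c) :=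
      fun a c => propext ⟨fun h => Option.some_injective _ h, fun h => by rw [h]⟩
    show (∑ l : Fin n, (@ite _ ((some l : Option (Fin n)) = some i) (Classical.propDecidable _) (x l) 0 -
      @ite _ ((some (l + 1) : Option (Fin n)) = some i) (Classical.propDecidable _) (x l) 0)) +
      ∑ l : Fin n, (@ite _ ((none : Option (Fin n)) = some i) (Classical.propDecidable _) (y l) 0 -
      @ite _ ((some l : Option (Fin n)) = some i) (Classical.propDecidable _) (y l) 0) = b (some i)
    simp only [hinj, Option.some.injEq, reduceCtorEq, if_false]
    simp only [show ∀ l : Fin n, (l + 1 = i) = (l = i - 1) from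
      fun l => propext eq_sub_iff_add_eq.symm]
    simp only [Finset.sum_sub_distrib, Finset.sum_ite_eq', Finset.mem_univ, if_true,
      Finset.sum_const_zero]
    simp only [hydef]
    ring

/-- For an odd wheel `W_{2k+1}` (`k ≥ 1`) and a zero-sum `ℤ₃`-boundary `b` which is not
identically zero, there is an orientation realizing `b`. -/
theorem oddWheel_orientation (k : ℕ) (hk : 1 ≤ k)
    (b : (wheelGraph (2 * k + 1) (by omega)).V → ZMod 3)
    (hsum : (∑ v, b v) = 0) (hne : ∃ v, b v ≠ 0) :
    ∃ D : (wheelGraph (2 * k + 1) (by omega)).E → Bool,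
      ∀ x, ((wheelGraph (2 * k + 1) (by omega)).outDeg D x : ZMod 3) -
        ((wheelGraph (2 * k + 1) (by omega)).inDeg D x : ZMod 3) = b x :=
  wheel_main (2 * k + 1) (by omega) b hsum hne
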